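/- Let s, s' > 1/2 and let z be a nonzero complex number in the closed upper half-plane. Then for every ψ ∈ L^{2,s}(ℝ), the free resolvent satisfies ‖R₀(z)ψ‖_{−s'} ≤ (2|z|^{1/2})^{−1} · (∫_ℝ (1+x²)^{−s'} dx)^{1/2} · (∫_ℝ (1+y²)^{−s} dy)^{1/2} · ‖ψ‖_s; in particular R₀(z) is a bounded operator from L^{2,s}(ℝ) to L^{2,−s'}(ℝ). -/

import Mathlib

open MeasureTheory Filter

/-- The weighted norm `‖ψ‖_s = (∫ (1+x²)^s |ψ(x)|² dx)^{1/2}`. -/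
noncomputable def wnorm (s : ℝ) (ψ : ℝ → ℂ) : ℝ :=
  (∫ x : ℝ, (1 + x ^ 2) ^ s * ‖ψ x‖ ^ 2) ^ ((1 : ℝ) / 2)

/-- Membership in the weighted space `L^{2,s}(ℝ)`. -/
def MemL2s (s : ℝ) (ψ : ℝ → ℂ) : Prop :=
  Measurable ψ ∧ Integrable (fun x : ℝ => (1 + x ^ 2) ^ s * ‖ψ x‖ ^ 2)

/-- The free resolvent `(R₀(z)ψ)(x) = −(1/(2i z^{1/2})) ∫ exp(i z^{1/2}|x−y|) ψ(y) dy`,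
with the principal square root `z^{1/2}`. -/
noncomputable def R0 (z : ℂ) (ψ : ℝ → ℂ) (x : ℝ) : ℂ :=
  -(1 / (2 * Complex.I * z ^ ((1 : ℂ) / 2))) *
    ∫ y : ℝ, Complex.exp (Complex.I * z ^ ((1 : ℂ) / 2) * ((|x - y| : ℝ) : ℂ)) * ψ y

lemma base_pos (x : ℝ) : (0 : ℝ) < 1 + x ^ 2 := by positivity

/-- Integrability of the weight `(1+x²)^{-t}` for `t > 1/2`. -/
lemma integrable_weight {t : ℝ} (ht : t > 1 / 2) :
    Integrable (fun x : ℝ => (1 + x ^ 2) ^ (-t)) := by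
  have h : Integrable (fun x : ℝ => ((1 : ℝ) + ‖x‖ ^ 2) ^ (-(2 * t) / 2)) :=
    integrable_rpow_neg_one_add_norm_sq (E := ℝ) (by simpa using by linarith)
  refine h.congr (Eventually.of_forall fun x => ?_)
  show ((1 : ℝ) + ‖x‖ ^ 2) ^ (-(2 * t) / 2) = (1 + x ^ 2) ^ (-t)
  rw [Real.norm_eq_abs, sq_abs]
  congr 1
  ring

/-- The weighted integrand squares back. -/
lemma half_sq (a b : ℝ) (ha : 0 < a) : (a ^ (b / 2)) ^ (2 : ℕ) = a ^ b := by
  rw [← Real.rpow_natCast (a ^ (b / 2)) 2, ← Real.rpow_mul ha.le]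
  norm_num

lemma measurable_wt (t : ℝ) : Measurable fun x : ℝ => ((1 + x ^ 2) ^ t : ℝ) :=
  ((continuous_const.add (continuous_pow 2)).rpow_const
    (fun x => Or.inl (base_pos x).ne')).measurable

theorem stmt3 (s s' : ℝ) (hs : s > 1 / 2) (hs' : s' > 1 / 2)
    (z : ℂ) (hz : z ≠ 0) (hzim : 0 ≤ z.im)
    (ψ : ℝ → ℂ) (hψ : MemL2s s ψ) :
    wnorm (-s') (R0 z ψ) ≤
      (2 * ‖z‖ ^ ((1 : ℝ) / 2))⁻¹ *
        (∫ x : ℝ, (1 + x ^ 2) ^ (-s')) ^ ((1 : ℝ) / 2) *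
        (∫ y : ℝ, (1 + y ^ 2) ^ (-s)) ^ ((1 : ℝ) / 2) * wnorm s ψ := by
  obtain ⟨hmeas, hint⟩ := hψ
  set w : ℂ := z ^ ((1 : ℂ) / 2) with hw
  set Is : ℝ := ∫ y : ℝ, (1 + y ^ 2) ^ (-s) with hIs
  set Is' : ℝ := ∫ x : ℝ, (1 + x ^ 2) ^ (-s') with hIs'
  have hIs_nonneg : 0 ≤ Is := integral_nonneg fun y => Real.rpow_nonneg (base_pos y).le _
  have hIs'_nonneg : 0 ≤ Is' := integral_nonneg fun x => Real.rpow_nonneg (base_pos x).le _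
  have hwn_nonneg : 0 ≤ wnorm s ψ := Real.rpow_nonneg
    (integral_nonneg fun x => by positivity) _
  -- imaginary part of the square root is nonneg
  have him : (Complex.log z * (1 / 2)).im = z.arg * (1 / 2) := by
    simp [Complex.mul_im, Complex.log_im]
  have hwim : 0 ≤ w.im := by
    rw [hw, Complex.cpow_def_of_ne_zero hz, Complex.exp_im, him]
    apply mul_nonneg (Real.exp_nonneg _)
    apply Real.sin_nonneg_of_nonneg_of_le_pi
    · exact mul_nonneg (Complex.arg_nonneg_iff.2 hzim) (by norm_num)
    · have h1 := Complex.arg_le_pi z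
      have h2 := Complex.arg_nonneg_iff.2 hzim
      nlinarith [Real.pi_pos]
  have hwabs : ‖w‖ = ‖z‖ ^ ((1 : ℝ) / 2) := by
    rw [hw, Complex.norm_cpow_of_ne_zero hz]
    simp
  have hA_pos : (0 : ℝ) < ‖z‖ ^ ((1 : ℝ) / 2) :=
    Real.rpow_pos_of_pos (by simpa using hz) _
  -- kernel bound
  have hker : ∀ x y : ℝ, ‖Complex.exp (Complex.I * w * ((|x - y| : ℝ) : ℂ))‖ ≤ 1 := by
    intro x y
    rw [Complex.norm_exp]
    refine Real.exp_le_one_iff.2 ?_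
    have : (Complex.I * w * ((|x - y| : ℝ) : ℂ)).re = -w.im * |x - y| := by
      simp [Complex.mul_re, Complex.mul_im]
    rw [this]
    have := abs_nonneg (x - y)
    nlinarith
  -- square identities
  have e1 : ∀ a : ℝ, ((1 + a ^ 2) ^ (-s / 2) : ℝ) ^ (2 : ℕ) = (1 + a ^ 2) ^ (-s) :=
    fun a => half_sq _ _ (base_pos a)
  have e2 : ∀ a : ℝ, ((1 + a ^ 2) ^ (s / 2) * ‖ψ a‖ : ℝ) ^ (2 : ℕ) =
      (1 + a ^ 2) ^ s * ‖ψ a‖ ^ 2 := fun a => by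
    rw [mul_pow, half_sq _ _ (base_pos a)]
  have hf2 : Integrable (fun y : ℝ => ((1 + y ^ 2) ^ (-s / 2) : ℝ) ^ (2 : ℕ)) := by
    refine (integrable_weight hs).congr (Eventually.of_forall fun y => (e1 y).symm)
  have hg2 : Integrable (fun y : ℝ => ((1 + y ^ 2) ^ (s / 2) * ‖ψ y‖ : ℝ) ^ (2 : ℕ)) := by
    refine hint.congr (Eventually.of_forall fun y => (e2 y).symm)
  have hfmeas : Measurable fun y : ℝ => ((1 + y ^ 2) ^ (-s / 2) : ℝ) := measurable_wt _
  have hgmeas : Measurable fun y : ℝ => ((1 + y ^ 2) ^ (s / 2) * ‖ψ y‖ : ℝ) :=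
    (measurable_wt _).mul hmeas.norm
  have hfg : ∀ y : ℝ, (1 + y ^ 2) ^ (-s / 2) * ((1 + y ^ 2) ^ (s / 2) * ‖ψ y‖) = ‖ψ y‖ := by
    intro y
    rw [← mul_assoc, ← Real.rpow_add (base_pos y), show -s / 2 + s / 2 = 0 by ring,
      Real.rpow_zero, one_mul]
  have hnint : Integrable (fun y : ℝ => ‖ψ y‖) := by
    refine Integrable.mono' (((integrable_weight hs).add hint).const_mul (1 / 2))
      hmeas.norm.aestronglyMeasurable (Eventually.of_forall fun y => ?_)
    rw [Real.norm_of_nonneg (norm_nonneg _), ← hfg y]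
    have h1 : (1 + y ^ 2) ^ (-s / 2) * ((1 + y ^ 2) ^ (s / 2) * ‖ψ y‖) ≤
        (((1 + y ^ 2) ^ (-s / 2)) ^ 2 + ((1 + y ^ 2) ^ (s / 2) * ‖ψ y‖) ^ 2) / 2 := by
      nlinarith [sq_nonneg ((1 + y ^ 2) ^ (-s / 2) - (1 + y ^ 2) ^ (s / 2) * ‖ψ y‖)]
    refine h1.trans (le_of_eq ?_)
    show _ = 1 / 2 * ((fun x : ℝ => ((1 + x ^ 2) ^ (-s) : ℝ)) y +
      (fun x : ℝ => (1 + x ^ 2) ^ s * ‖ψ x‖ ^ 2) y)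
    simp only [e1 y, e2 y]
    ring
  have hψint : Integrable ψ := (integrable_norm_iff hmeas.aestronglyMeasurable).1 hnint
  -- Cauchy–Schwarz
  have hCS : (∫ y : ℝ, ‖ψ y‖) ≤ Is ^ ((1 : ℝ) / 2) * wnorm s ψ := by
    have hpq : Real.HolderConjugate 2 2 := Real.HolderConjugate.two_two
    have h2 : ENNReal.ofReal (2 : ℝ) = 2 := by norm_num [ENNReal.ofReal]
    have hfmem : MemLp (fun y : ℝ => ((1 + y ^ 2) ^ (-s / 2) : ℝ)) (ENNReal.ofReal 2) := by
      rw [h2]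
      exact (memLp_two_iff_integrable_sq hfmeas.aestronglyMeasurable).2 hf2
    have hgmem : MemLp (fun y : ℝ => ((1 + y ^ 2) ^ (s / 2) * ‖ψ y‖ : ℝ)) (ENNReal.ofReal 2) := by
      rw [h2]
      exact (memLp_two_iff_integrable_sq hgmeas.aestronglyMeasurable).2 hg2
    have hH := integral_mul_le_Lp_mul_Lq_of_nonneg hpq
      (Eventually.of_forall fun y => Real.rpow_nonneg (base_pos y).le _)
      (Eventually.of_forall fun y => by positivity) hfmem hgmem
    simp only [hfg, Real.rpow_two, e1, e2] at hH
    refine hH.trans (le_of_eq ?_)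
    rw [hIs, wnorm]
  set C : ℝ := (2 * ‖z‖ ^ ((1 : ℝ) / 2))⁻¹ * (Is ^ ((1 : ℝ) / 2) * wnorm s ψ) with hC
  have hC_nonneg : 0 ≤ C := by
    apply mul_nonneg (by positivity)
    exact mul_nonneg (Real.rpow_nonneg hIs_nonneg _) hwn_nonneg
  -- pointwise bound on R0
  have hpoint : ∀ x : ℝ, ‖R0 z ψ x‖ ≤ C := by
    intro x
    rw [R0, norm_mul]
    have hcoef : ‖-(1 / (2 * Complex.I * z ^ ((1 : ℂ) / 2)))‖ =
        (2 * ‖z‖ ^ ((1 : ℝ) / 2))⁻¹ := by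
      rw [norm_neg, norm_div]
      simp only [norm_one, norm_mul, Complex.norm_I, Complex.norm_two]
      rw [← hw, hwabs]
      field_simp
    rw [hcoef, hC]
    refine mul_le_mul_of_nonneg_left ?_ (by positivity)
    calc ‖∫ y : ℝ, Complex.exp (Complex.I * z ^ ((1 : ℂ) / 2) * ((|x - y| : ℝ) : ℂ)) * ψ y‖
        ≤ ∫ y : ℝ, ‖Complex.exp (Complex.I * z ^ ((1 : ℂ) / 2) * ((|x - y| : ℝ) : ℂ)) * ψ y‖ :=
          norm_integral_le_integral_norm _
      _ ≤ ∫ y : ℝ, ‖ψ y‖ := by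
          refine integral_mono_of_nonneg (Eventually.of_forall fun y => norm_nonneg _)
            hnint (Eventually.of_forall fun y => ?_)
          show ‖Complex.exp (Complex.I * z ^ ((1 : ℂ) / 2) * ((|x - y| : ℝ) : ℂ)) * ψ y‖ ≤ ‖ψ y‖
          rw [norm_mul]
          calc ‖Complex.exp (Complex.I * z ^ ((1 : ℂ) / 2) * ((|x - y| : ℝ) : ℂ))‖ * ‖ψ y‖
              ≤ 1 * ‖ψ y‖ := mul_le_mul_of_nonneg_right (by rw [← hw]; exact hker x y)
                (norm_nonneg _)
            _ = ‖ψ y‖ := one_mul _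
      _ ≤ Is ^ ((1 : ℝ) / 2) * wnorm s ψ := hCS
  -- final estimate
  have hmain : (∫ x : ℝ, (1 + x ^ 2) ^ (-s') * ‖R0 z ψ x‖ ^ 2) ≤ C ^ 2 * Is' := by
    rw [hIs', ← integral_const_mul]
    refine integral_mono_of_nonneg (Eventually.of_forall fun x => by positivity)
      (((integrable_weight hs').const_mul _)) (Eventually.of_forall fun x => ?_)
    show (1 + x ^ 2) ^ (-s') * ‖R0 z ψ x‖ ^ 2 ≤ C ^ 2 * (1 + x ^ 2) ^ (-s')
    rw [mul_comm (C ^ 2)]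
    refine mul_le_mul_of_nonneg_left ?_ (Real.rpow_nonneg (base_pos x).le _)
    exact pow_le_pow_left₀ (norm_nonneg _) (hpoint x) 2
  have hle : wnorm (-s') (R0 z ψ) ≤ (C ^ 2 * Is') ^ ((1 : ℝ) / 2) := by
    rw [wnorm]
    exact Real.rpow_le_rpow (integral_nonneg fun x => by positivity) hmain (by norm_num)
  refine hle.trans (le_of_eq ?_)
  rw [Real.mul_rpow (sq_nonneg C) hIs'_nonneg]
  have hC2 : (C ^ 2 : ℝ) ^ ((1 : ℝ) / 2) = C := by
    rw [← Real.rpow_natCast C 2, ← Real.rpow_mul hC_nonneg]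
    norm_num
  rw [hC2, hC]
  ring
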